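/- For every k ≥ 2, the cycle C_{2k+1} of odd length 2k+1 admits a proper 3-coloring in which some vertex has a monochromatic neighborhood, and moreover, repeatedly deleting vertices with monochromatic neighborhoods reduces the cycle to the empty graph. -/
import Mathlib

/-- Helper: reduce `x % n` to subtraction when `x < 2n`. -/
lemma mod_two_lt {n x : ℕ} (hn : 0 < n) (hx : x < 2 * n) :
    x % n = if x < n then x else x - n := by
  split_ifs with h
  · exact Nat.mod_eq_of_lt h
  · rw [Nat.mod_eq_sub_mod (by omega), Nat.mod_eq_of_lt (by omega)]

/-- Adjacency in the cycle graph in terms of natural number values. -/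
lemma cycle_adj_nat {n : ℕ} (hn : 2 ≤ n) {u v : Fin n} :
    (SimpleGraph.cycleGraph n).Adj u v ↔
      (u.val = (v.val + 1) % n ∨ v.val = (u.val + 1) % n) := by
  rw [SimpleGraph.cycleGraph_adj', Fin.sub_def, Fin.sub_def]
  simp only
  have hu := u.isLt
  have hv := v.isLt
  rw [mod_two_lt (by omega) (by omega), mod_two_lt (by omega) (by omega),
    mod_two_lt (by omega) (by omega), mod_two_lt (by omega) (by omega)]
  constructor
  · intro h; split_ifs at h ⊢ <;> omega
  · intro h; split_ifs at h ⊢ <;> omega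

lemma succ_mod {n x : ℕ} (hx : x < n) :
    (x + 1) % n = if x + 1 = n then 0 else x + 1 := by
  split_ifs with h
  · rw [h, Nat.mod_self]
  · exact Nat.mod_eq_of_lt (by omega)

theorem stmt2 (k : ℕ) (hk : 2 ≤ k) :
    ∃ c : Fin (2*k+1) → Fin 3,
      (∀ u v, (SimpleGraph.cycleGraph (2*k+1)).Adj u v → c u ≠ c v) ∧
      (∃ v, ∀ u w, (SimpleGraph.cycleGraph (2*k+1)).Adj v u →
        (SimpleGraph.cycleGraph (2*k+1)).Adj v w → c u = c w) ∧
      ∃ e : Fin (2*k+1) ≃ Fin (2*k+1),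
        ∀ i u w : Fin (2*k+1), i ≤ e.symm u → i ≤ e.symm w →
          (SimpleGraph.cycleGraph (2*k+1)).Adj (e i) u →
          (SimpleGraph.cycleGraph (2*k+1)).Adj (e i) w → c u = c w := by
  set n := 2 * k + 1 with hn
  have hn2 : 2 ≤ n := by omega
  refine ⟨fun i => if i.val = 0 ∨ i.val = 2*k - 1 then 0
      else if i.val = 2*k then 1 else if i.val % 2 = 1 then 1 else 2, ?_, ?_, ?_⟩
  · -- properness
    intro u v hadj
    rw [cycle_adj_nat hn2] at hadj
    rw [succ_mod u.isLt, succ_mod v.isLt] at hadj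
    have hu : u.val < n := u.isLt
    have hv : v.val < n := v.isLt
    have hadj' : (u.val = v.val + 1 ∨ v.val = u.val + 1) ∨
        (u.val = 0 ∧ v.val = 2*k) ∨ (v.val = 0 ∧ u.val = 2*k) := by
      rcases hadj with h | h <;> split_ifs at h <;> omega
    simp only
    split_ifs <;> first | decide | (exfalso; omega)
  · -- vertex 0 has monochromatic neighborhood
    refine ⟨⟨0, by omega⟩, ?_⟩
    intro u w hu hw
    rw [cycle_adj_nat hn2] at hu hw
    simp only at hu hw
    rw [succ_mod u.isLt, succ_mod (show (0:ℕ) < n by omega)] at hu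
    rw [succ_mod w.isLt, succ_mod (show (0:ℕ) < n by omega)] at hw
    have hu' : u.val = 1 ∨ u.val = 2*k := by
      rcases hu with h | h <;> split_ifs at h <;> omega
    have hw' : w.val = 1 ∨ w.val = 2*k := by
      rcases hw with h | h <;> split_ifs at h <;> omega
    simp only
    split_ifs <;> first | rfl | (exfalso; omega)
  · -- elimination ordering: identity
    refine ⟨Equiv.refl _, ?_⟩
    intro i u w hiu hiw hu hw
    simp only [Equiv.refl_apply, Equiv.refl_symm] at *
    rw [cycle_adj_nat hn2] at hu hw
    rw [succ_mod u.isLt, succ_mod i.isLt] at hu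
    rw [succ_mod w.isLt, succ_mod i.isLt] at hw
    rw [Fin.le_def] at hiu hiw
    by_cases hi0 : i.val = 0
    · have hu' : u.val = 1 ∨ u.val = 2*k := by
        rcases hu with h | h <;> split_ifs at h <;> omega
      have hw' : w.val = 1 ∨ w.val = 2*k := by
        rcases hw with h | h <;> split_ifs at h <;> omega
      split_ifs <;> first | rfl | (exfalso; omega)
    · have hu' : u.val = i.val + 1 := by
        rcases hu with h | h <;> split_ifs at h <;> omega
      have hw' : w.val = i.val + 1 := by
        rcases hw with h | h <;> split_ifs at h <;> omega
      have : u = w := Fin.ext (by omega)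
      rw [this]
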